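/- W_κ(λ) implies 2^{<κ} = κ. That is, if there exist a κ-tree T, a set B of λ ≥ κ cofinal branches, and a sequence ⟨W_α : α < κ⟩ with |W_α| < κ and W_α ⊆ 𝒫(T_α), such that every z ⊆ B of size < κ satisfies π_β[z] ∈ W_β for all sufficiently large β < κ, then 2^{<κ} = κ. -/

import Mathlib

open Cardinal Set
open scoped Classical

universe u v

namespace ForestPaper

variable {X : Type u} {μ : Type v}

/-- The domain of a partial function represented as an `Option`-valued function. -/
def pdom (f : X → Option μ) : Set X := {x | f x ≠ none}

/-- The range of a partial function. -/
def pran (f : X → Option μ) : Set μ := {y | ∃ x, f x = some y}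

/-- `Ext g f` means the partial function `g` extends `f`. -/
def Ext (g f : X → Option μ) : Prop := ∀ x, f x ≠ none → g x = f x

/-- Restriction of a partial function to a set. -/
noncomputable def pres (f : X → Option μ) (z : Set X) : X → Option μ :=
  fun x => if x ∈ z then f x else none

/-- The set of points of the common domain where `f` and `g` disagree. -/
def pdiff (f g : X → Option μ) : Set X :=
  {x | f x ≠ none ∧ g x ≠ none ∧ f x ≠ g x}

/-- `f` and `g` agree on their common domain. -/
def Agree (f g : X → Option μ) : Prop :=
  ∀ x, f x ≠ none → g x ≠ none → f x = g x

/-- Two members of `F` are compatible if they have a common extension in `F`. -/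
def Compat (F : Set (X → Option μ)) (f g : X → Option μ) : Prop :=
  ∃ h ∈ F, Ext h f ∧ Ext h g

/-- `A` is an antichain in `F`: a pairwise incompatible subset of `F`. -/
def IsAntichainIn (F A : Set (X → Option μ)) : Prop :=
  A ⊆ F ∧ ∀ f ∈ A, ∀ g ∈ A, f ≠ g → ¬ Compat F f g

/-- `A` is a maximal antichain in `F`. -/
def IsMaxAntichainIn (F A : Set (X → Option μ)) : Prop :=
  IsAntichainIn F A ∧ ∀ f ∈ F, ∃ g ∈ A, Compat F f g

/-- A `(c, X, μ)`-forest: a collection of partial functions from `X` to `μ` whose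
domains are exactly the subsets of `X` of size `< c`, with coherent restrictions
between levels (every restriction of a member is a member, and every member
extends to any larger admissible domain). -/
structure IsForest (c : Cardinal.{u}) (F : Set (X → Option μ)) : Prop where
  dom_small : ∀ f ∈ F, #(pdom f) < c
  exists_dom : ∀ z : Set X, #z < c → ∃ f ∈ F, pdom f = z
  restrict_mem : ∀ f ∈ F, ∀ z : Set X, z ⊆ pdom f → pres f z ∈ F
  extend_mem : ∀ f ∈ F, ∀ z : Set X, #z < c → pdom f ⊆ z →
    ∃ g ∈ F, pdom g = z ∧ Ext g f

/-- A family is `κ`-coherent when any two members disagree at `< κ` many points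
of their common domain. -/
def Coherent (κ : Cardinal.{u}) (F : Set (X → Option μ)) : Prop :=
  ∀ f ∈ F, ∀ g ∈ F, #(pdiff f g) < κ

/-- `F` is closed under modifications at `< κ` many points. -/
def ClosedMod (κ : Cardinal.{u}) (F : Set (X → Option μ)) : Prop :=
  ∀ f ∈ F, ∀ f' : X → Option μ, pdom f' = pdom f →
    #{x | f x ≠ f' x} < κ → f' ∈ F

/-- A partial function is injective (on its domain). -/
def PInj (f : X → Option μ) : Prop :=
  ∀ x y, f x ≠ none → f x = f y → x = y

/-- A partial function is `< κ`-to-1: every fiber has size `< κ`. -/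
def SmallTo1 (κ : Cardinal.{u}) (f : X → Option μ) : Prop :=
  ∀ y : μ, #{x | f x = some y} < κ

/-- `F` contains a `⊆`-well-ordered chain of order type `o`. -/
def HasChain (o : Ordinal.{u}) (F : Set (X → Option μ)) : Prop :=
  ∃ c : o.ToType → (X → Option μ), (∀ i, c i ∈ F) ∧
    ∀ i j, i < j → Ext (c j) (c i) ∧ c i ≠ c j

/-- A `κ`-tree presented as an inverse system of levels indexed by the ordinals
below `κ`, with projection maps, all levels of size `< κ`. -/
structure TreeSystem (κ : Cardinal.{u}) where
  Lev : κ.ord.ToType → Type u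
  proj : ∀ {α β : κ.ord.ToType}, β ≤ α → Lev α → Lev β
  proj_refl : ∀ (α : κ.ord.ToType) (x : Lev α), proj le_rfl x = x
  proj_comp : ∀ {α β γ : κ.ord.ToType} (h1 : γ ≤ β) (h2 : β ≤ α) (x : Lev α),
    proj h1 (proj h2 x) = proj (h1.trans h2) x
  small : ∀ α, #(Lev α) < κ

/-- A cofinal branch of a tree system: a coherent choice of a node at each level. -/
def Branch {κ : Cardinal.{u}} (T : TreeSystem κ) : Type u :=
  {b : ∀ α, T.Lev α // ∀ (α β : κ.ord.ToType) (h : β ≤ α), T.proj h (b α) = b β}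

/-- The principle `W_κ(λ)`: there are a `κ`-tree `T`, a set `B` of `λ` many
cofinal branches, and small families `W_α ⊆ 𝒫(T_α)` such that every subset of
`B` of size `< κ` has its level-`β` projections in `W_β` for all sufficiently
large `β`. -/
def WPrinciple (κ lam : Cardinal.{u}) : Prop :=
  ∃ (T : TreeSystem κ) (B : Set (Branch T))
    (W : ∀ α : κ.ord.ToType, Set (Set (T.Lev α))),
    #B = lam ∧ (∀ α, #(W α) < κ) ∧
    ∀ z : Set (Branch T), z ⊆ B → #z < κ →
      ∃ α, ∀ β, α ≤ β → {n : T.Lev β | ∃ b ∈ z, b.1 β = n} ∈ W β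



/-- In `κ.ord.ToType` for regular `κ`, any family of size `< κ` is bounded above. -/
lemma exists_ub_of_small {κ : Cardinal.{u}} (hκ : κ.IsRegular) {ι : Type u} (hι : #ι < κ)
    (f : ι → κ.ord.ToType) : ∃ γ, ∀ i, f i ≤ γ := by
  let e := (Ordinal.ToType.mk (o := κ.ord))
  have hlt : (⨆ i, (e.symm (f i)).1) < κ.ord :=
    Cardinal.iSup_lt_ord_of_isRegular hκ hι (fun i => (e.symm (f i)).2)
  refine ⟨e ⟨_, hlt⟩, fun i => ?_⟩
  have h : e.symm (f i) ≤ ⟨_, hlt⟩ := Ordinal.le_iSup _ i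
  simpa using e.le_iff_le.2 h

/-- `W_κ(λ)` implies `2^{<κ} = κ`. -/
theorem stmt18 (κ lam : Cardinal.{u}) (hκ : κ.IsRegular) (huncount : ℵ₀ < κ)
    (hlam : κ ≤ lam) (hW : WPrinciple κ lam) :
    (2 : Cardinal.{u}) ^< κ = κ := by
  obtain ⟨T, B, W, hB, hWsmall, hcover⟩ := hW
  have hκ0 : ℵ₀ ≤ κ := hκ.aleph0_le
  -- Main estimate: `2 ^ ν ≤ κ` for every `ν < κ`.
  have main : ∀ ν < κ, (2 : Cardinal.{u}) ^ ν ≤ κ := by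
    intro ν hν
    have hνB : ν ≤ #B := le_of_lt (lt_of_lt_of_le hν (hlam.trans_eq hB.symm))
    obtain ⟨p, hp⟩ := Cardinal.le_mk_iff_exists_set.1 hνB
    set z : Set (Branch T) := Subtype.val '' p with hzdef
    have hzB : z ⊆ B := by rintro _ ⟨b, -, rfl⟩; exact b.2
    have hzcard : #z = ν := by
      rw [hzdef, Cardinal.mk_image_eq Subtype.val_injective, hp]
    have hne : Nonempty κ.ord.ToType := by
      refine Ordinal.nonempty_toType_iff.2 ?_
      simpa [Cardinal.ord_eq_zero] using (Cardinal.aleph0_pos.trans_le hκ0).ne'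
    -- for each pair of distinct branches, a level where they differ
    have hpair : ∀ q : ↥z × ↥z, ∃ α,
        q.1 ≠ q.2 → (q.1 : Branch T).1 α ≠ (q.2 : Branch T).1 α := by
      intro q
      by_cases h : q.1 = q.2
      · exact ⟨Classical.arbitrary _, fun hq => absurd h hq⟩
      · have h1 : (q.1 : Branch T) ≠ (q.2 : Branch T) :=
          fun he => h (Subtype.ext he)
        have h2 : (q.1 : Branch T).1 ≠ (q.2 : Branch T).1 :=
          fun he => h1 (Subtype.ext he)
        obtain ⟨α, hα⟩ := Function.ne_iff.1 h2
        exact ⟨α, fun _ => hα⟩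
    choose D hD using hpair
    have hzz : #(↥z × ↥z) < κ := by
      simp only [Cardinal.mk_prod, Cardinal.lift_id, hzcard]
      exact Cardinal.mul_lt_of_lt hκ0 hν hν
    obtain ⟨γ, hγ⟩ := exists_ub_of_small hκ hzz D
    -- above level γ, distinct branches of z have distinct nodes
    have hinj : ∀ β, γ ≤ β → ∀ b b' : ↥z,
        (b : Branch T).1 β = (b' : Branch T).1 β → b = b' := by
      intro β hβ b b' he
      by_contra hbb
      have hD' := hD (b, b') hbb
      have hle : D (b, b') ≤ β := le_trans (hγ (b, b')) hβ
      apply hD'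
      calc (b : Branch T).1 (D (b, b'))
          = T.proj hle ((b : Branch T).1 β) := ((b : Branch T).2 β _ hle).symm
        _ = T.proj hle ((b' : Branch T).1 β) := by rw [he]
        _ = (b' : Branch T).1 (D (b, b')) := (b' : Branch T).2 β _ hle
    -- for each subset of z, a level past which projections land in W
    have hcov : ∀ s : Set ↥z, ∃ α, ∀ β, α ≤ β →
        {n : T.Lev β | ∃ b ∈ Subtype.val '' s, b.1 β = n} ∈ W β := by
      intro s
      refine hcover _ ?_ ?_
      · rintro _ ⟨b, -, rfl⟩; exact hzB b.2
      · calc #(Subtype.val '' s) = #s := Cardinal.mk_image_eq Subtype.val_injective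
          _ ≤ #z := Cardinal.mk_set_le s
          _ = ν := hzcard
          _ < κ := hν
    choose A hA using hcov
    -- the coding map
    let Φ : Set ↥z → Σ β : κ.ord.ToType, ↥(W β) := fun s =>
      ⟨max γ (A s), ⟨_, hA s _ (le_max_right _ _)⟩⟩
    let R : (Σ β : κ.ord.ToType, ↥(W β)) → Set ↥z := fun x =>
      {b | (b : Branch T).1 x.1 ∈ (x.2 : Set (T.Lev x.1))}
    have hleft : Function.LeftInverse R Φ := by
      intro s
      ext b
      constructor
      · rintro ⟨-, ⟨c, hc, rfl⟩, he⟩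
        have : c = b := hinj _ (le_max_left _ _) c b he
        exact this ▸ hc
      · intro hb
        exact ⟨(b : Branch T), ⟨b, hb, rfl⟩, rfl⟩
    have hΦ : #(Set ↥z) ≤ #(Σ β : κ.ord.ToType, ↥(W β)) :=
      Cardinal.mk_le_of_injective hleft.injective
    have hsig : #(Σ β : κ.ord.ToType, ↥(W β)) ≤ κ := by
      calc #(Σ β : κ.ord.ToType, ↥(W β)) = Cardinal.sum (fun β => #(W β)) :=
            Cardinal.mk_sigma _
        _ ≤ Cardinal.sum (fun _ : κ.ord.ToType => κ) :=
            Cardinal.sum_le_sum _ _ (fun β => (hWsmall β).le)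
        _ = #(κ.ord.ToType) * κ := Cardinal.sum_const' _ _
        _ = κ * κ := by rw [Cardinal.mk_toType, Cardinal.card_ord]
        _ = κ := Cardinal.mul_eq_self hκ0
    calc (2 : Cardinal.{u}) ^ ν = 2 ^ #z := by rw [hzcard]
      _ = #(Set ↥z) := (Cardinal.mk_set ..).symm
      _ ≤ κ := hΦ.trans hsig
  refine le_antisymm (Cardinal.powerlt_le.2 main) ?_
  by_contra h
  push_neg at h
  exact absurd (Cardinal.le_powerlt 2 h) (Cardinal.cantor _).not_ge
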